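/- (Bounds for preconditioned gradient descent.) Let d ≥ 1, n ≥ 2, σ > 0, η ≥ 0, β ≥ 0, B ≥ 0. Let g_1, …, g_n ∈ ℝ^d satisfy ‖g_u‖ ≤ B for all u, with mean μ = (1/n)·Σ_v g_v and leave-one-out means μ_{-u} = (1/(n−1))·Σ_{v≠u} g_v. Let M_1, …, M_n be continuous linear maps on ℝ^d with average M̄ = (1/n)·Σ_v M_v, satisfying the stability condition ‖M_u − M_v‖ ≤ β/n in operator norm for all u, v. Let Θ₀ ∈ ℝ^d, set δ_u = −η·M_u(μ_{-u}), let P_u = N(Θ₀ + δ_u, σ²I) be the isotropic Gaussian on ℝ^d with mean Θ₀ + δ_u, and P̄ = (1/n)·Σ_v P_v. Then (1/n)·Σ_{u=1}^n KL(P_u ‖ P̄) ≤ (3η²/σ²)·(n/(n−1))²·(1/n)·Σ_{u=1}^n ‖(M_u − M̄)μ‖² + (3η²/(σ²(n−1)²))·(1/n)·Σ_{u=1}^n ‖M_u(g_u − μ)‖² + 3η²β²B²/(σ²(n−1)²n²). -/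

import Mathlib

open MeasureTheory ProbabilityTheory Finset
open scoped ENNReal NNReal

/-- The isotropic Gaussian measure `N(a, σ²I)` on `ℝ^d`, i.e. the product over the `d`
coordinates of one-dimensional Gaussian measures with means `a i` and common variance `σ²`. -/
noncomputable def gaussianPi {d : ℕ} (a : EuclideanSpace ℝ (Fin d)) (σ : ℝ) :
    Measure (EuclideanSpace ℝ (Fin d)) :=
  (Measure.pi fun i => gaussianReal (a i) ((σ ^ 2).toNNReal)).map (WithLp.toLp 2)

open Classical in
/-- The Kullback–Leibler divergence `KL(μ‖ν) = ∫ log(dμ/dν) dμ` (valued in `ℝ≥0∞`),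
defined when `μ ≪ ν` and the log-likelihood ratio is integrable, and `∞` otherwise. -/
noncomputable def klDiv {α : Type*} [MeasurableSpace α] (μ ν : Measure α) : ℝ≥0∞ :=
  if μ ≪ ν ∧ Integrable (llr μ ν) μ then ENNReal.ofReal (∫ x, llr μ ν x ∂μ) else ⊤


section Aux

open Real

lemma integrable_id_gaussianReal (m : ℝ) {V : ℝ≥0} (hV : V ≠ 0) :
    Integrable (fun x : ℝ => x) (gaussianReal m V) := by
  rw [gaussianReal_of_var_ne_zero m hV,
    integrable_withDensity_iff (measurable_gaussianPDF m V)
      (ae_of_all _ fun x => ENNReal.ofReal_lt_top)]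
  have hVpos : (0:ℝ) < (V:ℝ) := by positivity
  have hb : (0:ℝ) < 1 / (2 * (V:ℝ)) := by positivity
  set c : ℝ := (Real.sqrt (2 * π * (V:ℝ)))⁻¹ with hc
  have key : Integrable (fun y : ℝ => c * (y * Real.exp (-(1/(2*(V:ℝ))) * y ^ 2))
      + (c * m) * Real.exp (-(1/(2*(V:ℝ))) * y ^ 2)) volume :=
    ((integrable_mul_exp_neg_mul_sq hb).const_mul c).add
      ((integrable_exp_neg_mul_sq hb).const_mul (c * m))
  have key2 := key.comp_sub_right m
  refine key2.congr (ae_of_all _ fun x => ?_)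
  simp only [gaussianPDF, ENNReal.toReal_ofReal (gaussianPDFReal_nonneg m V x)]
  rw [gaussianPDFReal]
  have : -(1/(2*(V:ℝ))) * (x - m) ^ 2 = -(x - m) ^ 2 / (2 * (V:ℝ)) := by ring
  rw [this]
  ring

lemma integral_id_gaussianReal (m : ℝ) {V : ℝ≥0} (hV : V ≠ 0) :
    ∫ x, x ∂(gaussianReal m V) = m := by
  have hint0 : Integrable (fun x : ℝ => x) (gaussianReal 0 V) := integrable_id_gaussianReal 0 hV
  have h0 : ∫ x, x ∂(gaussianReal 0 V) = 0 := by
    have hmap : Measure.map (fun x : ℝ => (-1 : ℝ) * x) (gaussianReal 0 V) = gaussianReal 0 V := by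
      rw [gaussianReal_map_const_mul]
      norm_num
    have h1 := integral_map (μ := gaussianReal 0 V) (φ := fun x => (-1:ℝ)*x) (f := fun x => x)
      (by fun_prop) (by exact measurable_id.aestronglyMeasurable)
    rw [hmap] at h1
    simp only [neg_mul, one_mul] at h1
    have h2 : ∫ x : ℝ, -x ∂(gaussianReal 0 V) = - ∫ x : ℝ, x ∂(gaussianReal 0 V) :=
      integral_neg (fun x => x)
    rw [h2] at h1
    linarith
  have hmap : Measure.map (fun x : ℝ => x + m) (gaussianReal 0 V) = gaussianReal m V := by
    rw [gaussianReal_map_add_const m, zero_add]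
  have h1 := integral_map (μ := gaussianReal 0 V) (φ := fun x => x + m) (f := fun x => x)
    (by fun_prop) (by exact measurable_id.aestronglyMeasurable)
  rw [hmap] at h1
  rw [h1, integral_add hint0 (integrable_const m), h0, integral_const]
  simp

lemma map_eval_pi {d : ℕ} (μs : Fin d → Measure ℝ) [∀ i, IsProbabilityMeasure (μs i)]
    (i : Fin d) :
    (Measure.pi μs).map (fun x => x i) = μs i := by
  classical
  refine Measure.ext fun s hs => ?_
  rw [Measure.map_apply (measurable_pi_apply i) hs]
  have hpre : (fun x : Fin d → ℝ => x i) ⁻¹' s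
      = Set.pi Set.univ (Function.update (fun _ : Fin d => (Set.univ : Set ℝ)) i s) := by
    ext x
    simp only [Set.mem_preimage, Set.mem_univ_pi, Function.update_apply]
    constructor
    · intro hx j
      by_cases hj : j = i
      · subst hj; simp [hx]
      · simp [hj]
    · intro hx
      have := hx i
      simpa using this
  rw [hpre, Measure.pi_pi]
  rw [Finset.prod_eq_single i (fun j _ hj => by simp [Function.update_apply, hj]) (by simp)]
  simp

lemma integrable_comp_eval {d : ℕ} (μs : Fin d → Measure ℝ) [∀ i, IsProbabilityMeasure (μs i)]
    (i : Fin d) {φ : ℝ → ℝ} (hφ : Measurable φ) (h : Integrable φ (μs i)) :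
    Integrable (fun x : Fin d → ℝ => φ (x i)) (Measure.pi μs) :=
  (integrable_map_measure (f := fun x : Fin d → ℝ => x i) (g := φ)
    (by rw [map_eval_pi μs i]; exact hφ.aestronglyMeasurable)
    (measurable_pi_apply i).aemeasurable).mp (by rwa [map_eval_pi μs i])

lemma integral_comp_eval {d : ℕ} (μs : Fin d → Measure ℝ) [∀ i, IsProbabilityMeasure (μs i)]
    (i : Fin d) {φ : ℝ → ℝ} (hφ : Measurable φ) :
    ∫ x, φ (x i) ∂(Measure.pi μs) = ∫ y, φ y ∂(μs i) := by
  have h := integral_map (μ := Measure.pi μs) (φ := fun x : Fin d → ℝ => x i) (f := φ)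
    (measurable_pi_apply i).aemeasurable
    (by rw [map_eval_pi μs i]; exact hφ.aestronglyMeasurable)
  rw [map_eval_pi μs i] at h
  rw [← h]

lemma withDensity_finset_sum {α ι : Type*} [MeasurableSpace α] (μ : Measure α) (s : Finset ι)
    (f : ι → α → ℝ≥0∞) (hf : ∀ i, Measurable (f i)) :
    μ.withDensity (fun x => ∑ i ∈ s, f i x) = ∑ i ∈ s, μ.withDensity (f i) := by
  classical
  induction s using Finset.induction with
  | empty => simp
  | @insert a s h ih =>
      rw [Finset.sum_insert h]
      have : (fun x => ∑ i ∈ insert a s, f i x) = f a + fun x => ∑ i ∈ s, f i x := by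
        funext x; simp [Finset.sum_insert h]
      rw [this, withDensity_add_left (hf a), ih]

lemma pi_gaussian_withDensity {d : ℕ} (a : Fin d → ℝ) {V : ℝ≥0} (hV : V ≠ 0) :
    Measure.pi (fun i => gaussianReal (a i) V)
      = (Measure.pi fun _ : Fin d => (volume : Measure ℝ)).withDensity
          (fun x => ∏ i, gaussianPDF (a i) V (x i)) := by
  classical
  refine Measure.pi_eq fun s hs => ?_
  rw [withDensity_apply _ (MeasurableSet.univ_pi hs), ← lintegral_indicator (MeasurableSet.univ_pi hs)]
  set q : Fin d → ℝ → ℝ := fun i => (s i).indicator (gaussianPDFReal (a i) V) with hq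
  have hqnn : ∀ i x, 0 ≤ q i x := fun i x =>
    Set.indicator_nonneg (fun y _ => gaussianPDFReal_nonneg _ _ y) x
  have hind : ∀ x : Fin d → ℝ, (Set.univ.pi s).indicator
      (fun x => ∏ i, gaussianPDF (a i) V (x i)) x
      = ENNReal.ofReal (∏ i, q i (x i)) := by
    intro x
    by_cases hx : x ∈ Set.univ.pi s
    · rw [Set.indicator_of_mem hx, ENNReal.ofReal_prod_of_nonneg (fun i _ => hqnn i (x i))]
      refine Finset.prod_congr rfl fun i _ => ?_
      rw [hq]
      simp only [Set.indicator_of_mem (hx i (Set.mem_univ i)), gaussianPDF_def]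
    · rw [Set.indicator_of_notMem hx]
      have : ∃ i, x i ∉ s i := by
        by_contra hcon
        push_neg at hcon
        exact hx fun i _ => hcon i
      obtain ⟨i, hxi⟩ := this
      rw [Finset.prod_eq_zero (Finset.mem_univ i)
        (by rw [hq]; simp [Set.indicator_of_notMem hxi]), ENNReal.ofReal_zero]
  simp_rw [hind]
  have hqint : ∀ i, Integrable (q i) volume :=
    fun i => (integrable_gaussianPDFReal (a i) V).indicator (hs i)
  have hQint : Integrable (fun x : Fin d → ℝ => ∏ i, q i (x i)) (Measure.pi fun _ => volume) := by
    have := MeasureTheory.Integrable.fintype_prod_dep (𝕜 := ℝ) (f := q) hqint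
    exact this
  rw [← ofReal_integral_eq_lintegral_ofReal hQint
    (ae_of_all _ fun x => Finset.prod_nonneg fun i _ => hqnn i (x i))]
  have hprod : ∫ x : Fin d → ℝ, ∏ i, q i (x i) ∂(Measure.pi fun _ => volume)
      = ∏ i, ∫ y, q i y := by
    have := MeasureTheory.integral_fintype_prod_eq_prod (𝕜 := ℝ) q (μ := fun _ => volume)
    exact this
  rw [hprod, ENNReal.ofReal_prod_of_nonneg (fun i _ => integral_nonneg (hqnn i))]
  refine Finset.prod_congr rfl fun i _ => ?_
  rw [ofReal_integral_eq_lintegral_ofReal (hqint i) (ae_of_all _ (hqnn i)),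
    gaussianReal_apply (a i) hV (s i), ← lintegral_indicator (hs i)]
  congr 1
  funext y
  rw [hq]
  by_cases hy : y ∈ s i
  · simp [Set.indicator_of_mem hy, gaussianPDF_def]
  · simp [Set.indicator_of_notMem hy]

lemma sum_sum_norm_sub_sq_le {E : Type*} [NormedAddCommGroup E] [InnerProductSpace ℝ E]
    {n : ℕ} (x : Fin n → E) :
    ∑ u, ∑ v, ‖x u - x v‖^2 ≤ 2 * n * ∑ u, ‖x u‖^2 := by
  have expand : ∀ u, ∑ v, ‖x u - x v‖^2
      = (n:ℝ) * ‖x u‖^2 - 2 * (inner ℝ (x u) (∑ v, x v) : ℝ) + ∑ v, ‖x v‖^2 := by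
    intro u
    have : ∀ v, ‖x u - x v‖^2 = ‖x u‖^2 - 2 * (inner ℝ (x u) (x v) : ℝ) + ‖x v‖^2 :=
      fun v => norm_sub_sq_real _ _
    rw [Finset.sum_congr rfl fun v _ => this v, Finset.sum_add_distrib,
      Finset.sum_sub_distrib, Finset.sum_const, Finset.card_univ, Fintype.card_fin,
      nsmul_eq_mul, ← Finset.mul_sum, ← inner_sum]
  have key : ∑ u, (inner ℝ (x u) (∑ v, x v) : ℝ) = ‖∑ u, x u‖^2 := by
    rw [← sum_inner, real_inner_self_eq_norm_sq]
  calc ∑ u, ∑ v, ‖x u - x v‖^2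
      = ∑ u, ((n:ℝ) * ‖x u‖^2 - 2 * (inner ℝ (x u) (∑ v, x v) : ℝ) + ∑ v, ‖x v‖^2) :=
        Finset.sum_congr rfl fun u _ => expand u
    _ = (n:ℝ) * ∑ u, ‖x u‖^2 - 2 * ‖∑ u, x u‖^2 + (n:ℝ) * ∑ v, ‖x v‖^2 := by
        rw [Finset.sum_add_distrib, Finset.sum_sub_distrib, ← Finset.mul_sum,
          ← Finset.mul_sum, Finset.sum_const, Finset.card_univ, Fintype.card_fin,
          nsmul_eq_mul, key]
    _ ≤ 2 * n * ∑ u, ‖x u‖^2 := by nlinarith [sq_nonneg ‖∑ u, x u‖]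

set_option maxHeartbeats 1000000 in
lemma alg_bound {E : Type*} [NormedAddCommGroup E] [InnerProductSpace ℝ E] {n : ℕ} (hn : 2 ≤ n)
    (η σ T3 : ℝ) (hη : 0 ≤ η) (hσ2 : 0 < σ^2) (hT3 : 0 ≤ T3)
    (δ A C : Fin n → E)
    (hdd : ∀ u v, δ u - δ v = (-η) • ((A u - A v) - (((n:ℝ)-1)⁻¹) • (C u - C v))) :
    (n:ℝ)⁻¹ * ∑ u, ((n:ℝ)⁻¹ * ((∑ v, ‖δ u - δ v‖^2)/(2*σ^2)))
      ≤ (3*η^2/σ^2) * ((n:ℝ)/((n:ℝ)-1))^2 * ((1/(n:ℝ)) * ∑ u, ‖A u‖^2)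
        + (3*η^2/(σ^2*((n:ℝ)-1)^2)) * ((1/(n:ℝ)) * ∑ u, ‖C u‖^2) + T3 := by
  have hn0 : (0:ℝ) < n := by exact_mod_cast lt_of_lt_of_le two_pos hn
  have hn2 : (2:ℝ) ≤ n := by exact_mod_cast hn
  have hm : (1:ℝ) ≤ (n:ℝ) - 1 := by linarith
  have hm0 : (0:ℝ) < (n:ℝ) - 1 := by linarith
  set c : ℝ := ((n:ℝ)-1)⁻¹ with hc
  have hc0 : 0 < c := by positivity
  have hc1 : c ≤ 1 := by rw [hc]; rw [inv_le_one_iff₀]; right; exact hm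
  have hnc : 1 ≤ (n:ℝ) * c := by
    rw [hc, ← div_eq_mul_inv, le_div_iff₀ hm0]
    linarith
  -- pointwise bound
  have hnorm : ∀ u v, ‖δ u - δ v‖^2
      ≤ 2*η^2*‖A u - A v‖^2 + (2*η^2*c^2)*‖C u - C v‖^2 := by
    intro u v
    rw [hdd u v]
    have h1 : ‖(-η) • ((A u - A v) - c • (C u - C v))‖
        = η * ‖(A u - A v) - c • (C u - C v)‖ := by
      rw [norm_smul, Real.norm_eq_abs, abs_neg, abs_of_nonneg hη]
    have h2 : ‖(A u - A v) - c • (C u - C v)‖ ≤ ‖A u - A v‖ + c * ‖C u - C v‖ := by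
      refine le_trans (norm_sub_le _ _) ?_
      rw [norm_smul, Real.norm_eq_abs, abs_of_pos hc0]
    rw [h1]
    set p := ‖A u - A v‖ with hp
    set q := ‖C u - C v‖ with hqq
    set r := ‖(A u - A v) - c • (C u - C v)‖ with hr
    have hp0 : 0 ≤ p := norm_nonneg _
    have hq0 : 0 ≤ q := norm_nonneg _
    have hr0 : 0 ≤ r := norm_nonneg _
    have hsq : r^2 ≤ (p + c*q)^2 := by nlinarith [mul_nonneg hp0 (mul_nonneg hc0.le hq0)]
    have hexp : (p + c*q)^2 ≤ 2*p^2 + 2*c^2*q^2 := by nlinarith [sq_nonneg (p - c*q)]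
    calc (η*r)^2 = η^2 * r^2 := by ring
      _ ≤ η^2 * (2*p^2 + 2*c^2*q^2) := by
          apply mul_le_mul_of_nonneg_left (le_trans hsq hexp) (sq_nonneg η)
      _ = 2*η^2*p^2 + (2*η^2*c^2)*q^2 := by ring
  set sA : ℝ := ∑ u, ‖A u‖^2 with hsA
  set sC : ℝ := ∑ u, ‖C u‖^2 with hsC
  have hsA0 : 0 ≤ sA := Finset.sum_nonneg fun u _ => sq_nonneg _
  have hsC0 : 0 ≤ sC := Finset.sum_nonneg fun u _ => sq_nonneg _
  have hSA : ∑ u, ∑ v, ‖A u - A v‖^2 ≤ 2 * n * sA := sum_sum_norm_sub_sq_le A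
  have hSC : ∑ u, ∑ v, ‖C u - C v‖^2 ≤ 2 * n * sC := sum_sum_norm_sub_sq_le C
  have hD2 : ∑ u, ∑ v, ‖δ u - δ v‖^2
      ≤ 2*η^2 * (2*n*sA) + (2*η^2*c^2) * (2*n*sC) := by
    calc ∑ u, ∑ v, ‖δ u - δ v‖^2
        ≤ ∑ u, ∑ v, (2*η^2*‖A u - A v‖^2 + (2*η^2*c^2)*‖C u - C v‖^2) :=
          Finset.sum_le_sum fun u _ => Finset.sum_le_sum fun v _ => hnorm u v
      _ = 2*η^2 * (∑ u, ∑ v, ‖A u - A v‖^2) + (2*η^2*c^2) * (∑ u, ∑ v, ‖C u - C v‖^2) := by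
          simp only [Finset.sum_add_distrib, Finset.mul_sum]
      _ ≤ _ := by
          have h1 : (0:ℝ) ≤ 2*η^2 := by positivity
          have h2 : (0:ℝ) ≤ 2*η^2*c^2 := by positivity
          exact add_le_add (mul_le_mul_of_nonneg_left hSA h1)
            (mul_le_mul_of_nonneg_left hSC h2)
  have hσne : σ^2 ≠ 0 := ne_of_gt hσ2
  have hnne : (n:ℝ) ≠ 0 := ne_of_gt hn0
  have hmne : (n:ℝ) - 1 ≠ 0 := ne_of_gt hm0
  have hLHS : (n:ℝ)⁻¹ * ∑ u, ((n:ℝ)⁻¹ * ((∑ v, ‖δ u - δ v‖^2)/(2*σ^2)))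
      = (∑ u, ∑ v, ‖δ u - δ v‖^2) / (2*σ^2*(n:ℝ)^2) := by
    have hinv : ((2*σ^2*(n:ℝ)^2))⁻¹ = (n:ℝ)⁻¹ * ((n:ℝ)⁻¹ * (2*σ^2)⁻¹) := by
      field_simp
    rw [← Finset.mul_sum, ← Finset.sum_div, div_eq_mul_inv, div_eq_mul_inv, hinv]
    ring
  rw [hLHS]
  have step1 : (∑ u, ∑ v, ‖δ u - δ v‖^2) / (2*σ^2*(n:ℝ)^2)
      ≤ (2*η^2 * (2*(n:ℝ)*sA) + (2*η^2*c^2) * (2*(n:ℝ)*sC)) / (2*σ^2*(n:ℝ)^2) :=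
    (div_le_div_iff_of_pos_right (by positivity)).mpr hD2
  set w1 : ℝ := η^2*sA/(σ^2*(n:ℝ)) with hw1
  set w2 : ℝ := η^2*c^2*sC/(σ^2*(n:ℝ)) with hw2
  have hw10 : 0 ≤ w1 := by positivity
  have hw20 : 0 ≤ w2 := by positivity
  have e1 : (2*η^2*(2*(n:ℝ)*sA) + 2*η^2*c^2*(2*(n:ℝ)*sC))/(2*σ^2*(n:ℝ)^2) = 2*w1 + 2*w2 := by
    rw [hw1, hw2]
    field_simp
  have e2 : (3*η^2/σ^2) * ((n:ℝ)/((n:ℝ)-1))^2 * ((1/(n:ℝ))*sA) = 3*((n:ℝ)*c)^2*w1 := by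
    rw [hw1, hc]
    field_simp
  have e3 : (3*η^2/(σ^2*((n:ℝ)-1)^2)) * ((1/(n:ℝ))*sC) = 3*w2 := by
    rw [hw2, hc]
    field_simp
  have h4 : 1 ≤ ((n:ℝ)*c)^2 := by nlinarith
  rw [e2, e3]
  have final : 2*w1 + 2*w2 ≤ 3*((n:ℝ)*c)^2*w1 + 3*w2 + T3 := by
    nlinarith [mul_le_mul_of_nonneg_right h4 hw10]
  linarith [step1, e1.le, e1.ge]

set_option maxHeartbeats 1000000 in
lemma kl_mixture_le {d n : ℕ} (hn : 2 ≤ n) {σ : ℝ} (hσ : 0 < σ)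
    (b : Fin n → Fin d → ℝ) (u : Fin n) :
    klDiv (Measure.pi fun i => gaussianReal (b u i) ((σ^2).toNNReal))
        ((n : ℝ≥0∞)⁻¹ • ∑ v, Measure.pi fun i => gaussianReal (b v i) ((σ^2).toNNReal))
      ≤ ENNReal.ofReal ((n:ℝ)⁻¹ * ∑ v, (∑ i, (b u i - b v i)^2) / (2*σ^2)) := by
  classical
  have hσ2 : (0:ℝ) < σ^2 := by positivity
  set V : ℝ≥0 := (σ^2).toNNReal with hVdef
  have hV : V ≠ 0 := by
    rw [hVdef]
    exact fun hc => absurd (Real.toNNReal_eq_zero.mp hc) (not_le.2 hσ2)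
  have hVσ : (V:ℝ) = σ^2 := Real.coe_toNNReal _ (le_of_lt hσ2)
  have hnn : 0 < n := lt_of_lt_of_le two_pos hn
  have hn0 : (0:ℝ) < (n:ℝ) := by exact_mod_cast hnn
  set P : Fin n → Measure (Fin d → ℝ) := fun v => Measure.pi fun i => gaussianReal (b v i) V
    with hP
  haveI hprob : ∀ v, IsProbabilityMeasure (P v) := fun v => by rw [hP]; infer_instance
  set lm : Measure (Fin d → ℝ) := Measure.pi fun _ => volume with hlm
  set F : Fin n → (Fin d → ℝ) → ℝ≥0∞ := fun v x => ∏ i, gaussianPDF (b v i) V (x i) with hF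
  have hFmeas : ∀ v, Measurable (F v) := fun v =>
    Finset.measurable_prod _ fun i _ => (measurable_gaussianPDF _ _).comp (measurable_pi_apply i)
  have hPF : ∀ v, P v = lm.withDensity (F v) := fun v => pi_gaussian_withDensity (b v) hV
  set G : (Fin d → ℝ) → ℝ≥0∞ := fun x => (n:ℝ≥0∞)⁻¹ * ∑ v, F v x with hG
  have hGmeas : Measurable G := (Finset.measurable_sum _ fun v _ => hFmeas v).const_mul _
  set Pbar : Measure (Fin d → ℝ) := (n:ℝ≥0∞)⁻¹ • ∑ v, P v with hPbar
  have hPbarD : Pbar = lm.withDensity G := by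
    rw [hPbar]
    have h1 : (∑ v, P v) = lm.withDensity (fun x => ∑ v, F v x) := by
      rw [withDensity_finset_sum lm Finset.univ F hFmeas]
      exact Finset.sum_congr rfl fun v _ => hPF v
    rw [h1, ← withDensity_smul _ (Finset.measurable_sum _ fun v _ => hFmeas v)]
    congr 1
  -- real densities
  set f : Fin n → (Fin d → ℝ) → ℝ := fun v x => ∏ i, gaussianPDFReal (b v i) V (x i) with hf
  have hfpos : ∀ v x, 0 < f v x := fun v x =>
    Finset.prod_pos fun i _ => gaussianPDFReal_pos _ _ _ hV
  have hFf : ∀ v x, F v x = ENNReal.ofReal (f v x) := fun v x => by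
    rw [hf, hF]
    simp only [gaussianPDF_def]
    exact (ENNReal.ofReal_prod_of_nonneg fun i _ => gaussianPDFReal_nonneg _ _ _).symm
  set gb : (Fin d → ℝ) → ℝ := fun x => (n:ℝ)⁻¹ * ∑ v, f v x with hgb
  have hgbpos : ∀ x, 0 < gb x := fun x => by
    rw [hgb]
    have : 0 < ∑ v, f v x :=
      Finset.sum_pos (fun v _ => hfpos v x) ⟨⟨0, hnn⟩, Finset.mem_univ _⟩
    positivity
  have hGg : ∀ x, G x = ENNReal.ofReal (gb x) := fun x => by
    simp only [hG, hgb]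
    rw [ENNReal.ofReal_mul (by positivity),
      ENNReal.ofReal_sum_of_nonneg (fun v _ => (hfpos v x).le),
      ENNReal.ofReal_inv_of_pos hn0, ENNReal.ofReal_natCast]
    congr 1
    exact Finset.sum_congr rfl fun v _ => hFf v x
  have hGne0 : ∀ x, G x ≠ 0 := fun x => by
    rw [hGg x]; exact (ENNReal.ofReal_pos.2 (hgbpos x)).ne'
  have hGtop : ∀ x, G x ≠ ⊤ := fun x => by rw [hGg x]; exact ENNReal.ofReal_ne_top
  set h : (Fin d → ℝ) → ℝ≥0∞ := fun x => F u x / G x with hh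
  have hhmeas : Measurable h := (hFmeas u).div hGmeas
  have hPu : P u = Pbar.withDensity h := by
    rw [hPbarD, ← withDensity_mul _ hGmeas hhmeas, hPF u]
    congr 1
    funext x
    simp only [Pi.mul_apply, hh]
    exact (ENNReal.mul_div_cancel (hGne0 x) (hGtop x)).symm
  have hac : P u ≪ Pbar := hPu ▸ withDensity_absolutelyContinuous Pbar h
  haveI : IsProbabilityMeasure Pbar := by
    constructor
    rw [hPbar, Measure.smul_apply, Measure.finset_sum_apply]
    simp only [measure_univ, Finset.sum_const, Finset.card_univ, Fintype.card_fin,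
      nsmul_eq_mul, mul_one, smul_eq_mul]
    exact ENNReal.inv_mul_cancel (by exact_mod_cast Nat.cast_ne_zero.2 hnn.ne')
      (ENNReal.natCast_ne_top n)
  have hrn : Measure.rnDeriv (P u) Pbar =ᵐ[Pbar] h := by
    rw [hPu]; exact Measure.rnDeriv_withDensity Pbar hhmeas
  have hllr : llr (P u) Pbar =ᵐ[P u] fun x => Real.log (f u x / gb x) := by
    filter_upwards [hac.ae_le hrn] with x hx
    rw [llr, hx]
    simp only [hh]
    rw [hFf, hGg, ENNReal.toReal_div, ENNReal.toReal_ofReal (hfpos u x).le,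
      ENNReal.toReal_ofReal (hgbpos x).le]
  -- coordinate log-likelihood differences
  set l : Fin n → (Fin d → ℝ) → ℝ :=
    fun v x => ∑ i, ((x i - b v i)^2 - (x i - b u i)^2) / (2*σ^2) with hl
  have hlogf : ∀ v x, Real.log (f v x)
      = ∑ i, (Real.log ((Real.sqrt (2*π*(V:ℝ)))⁻¹) - (x i - b v i)^2/(2*σ^2)) := by
    intro v x
    simp only [hf]
    rw [Real.log_prod (fun i _ => (gaussianPDFReal_pos _ _ _ hV).ne')]
    refine Finset.sum_congr rfl fun i _ => ?_
    rw [gaussianPDFReal, Real.log_mul (by positivity) (Real.exp_ne_zero _), Real.log_exp, hVσ]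
    ring
  have ht : ∀ v x, Real.log (f u x) - Real.log (f v x) = l v x := by
    intro v x
    rw [hlogf u x, hlogf v x, ← Finset.sum_sub_distrib]
    simp only [hl]
    exact Finset.sum_congr rfl fun i _ => by ring
  set S : (Fin d → ℝ) → ℝ := fun x => ∑ v, |l v x| with hS
  set L : (Fin d → ℝ) → ℝ := fun x => (n:ℝ)⁻¹ * ∑ v, l v x with hL
  have hsum : ∀ x, ∑ v, l v x = n * Real.log (f u x) - ∑ v, Real.log (f v x) := by
    intro x
    calc ∑ v, l v x = ∑ v : Fin n, (Real.log (f u x) - Real.log (f v x)) :=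
          Finset.sum_congr rfl fun v _ => (ht v x).symm
      _ = _ := by
          rw [Finset.sum_sub_distrib, Finset.sum_const, Finset.card_univ, Fintype.card_fin,
            nsmul_eq_mul]
  have hLx : ∀ x, L x = Real.log (f u x) - (n:ℝ)⁻¹ * ∑ v, Real.log (f v x) := by
    intro x
    simp only [hL]
    rw [hsum x]
    field_simp
  have hllr_le : ∀ x, Real.log (f u x / gb x) ≤ L x := by
    intro x
    have hgb_ge : (n:ℝ)⁻¹ * ∑ v, Real.log (f v x) ≤ Real.log (gb x) := by
      have hgm := Real.geom_mean_le_arith_mean_weighted Finset.univ (fun _ => (n:ℝ)⁻¹)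
        (fun v => f v x) (fun _ _ => by positivity)
        (by simp only [Finset.sum_const, Finset.card_univ, Fintype.card_fin, nsmul_eq_mul]
            field_simp)
        (fun v _ => (hfpos v x).le)
      have h1 : Real.log (∏ v, (f v x) ^ ((n:ℝ)⁻¹)) = (n:ℝ)⁻¹ * ∑ v, Real.log (f v x) := by
        rw [Real.log_prod (fun v _ => (Real.rpow_pos_of_pos (hfpos v x) _).ne'),
          Finset.mul_sum]
        exact Finset.sum_congr rfl fun v _ => Real.log_rpow (hfpos v x) _
      have h2 : gb x = ∑ v, (n:ℝ)⁻¹ * f v x := by simp only [hgb]; rw [Finset.mul_sum]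
      calc (n:ℝ)⁻¹ * ∑ v, Real.log (f v x)
          = Real.log (∏ v, (f v x) ^ ((n:ℝ)⁻¹)) := h1.symm
        _ ≤ Real.log (gb x) := by
            apply Real.log_le_log (Finset.prod_pos fun v _ => Real.rpow_pos_of_pos (hfpos v x) _)
            rw [h2]; exact hgm
    rw [Real.log_div (hfpos u x).ne' (hgbpos x).ne', hLx x]
    linarith
  have hllr_ge : ∀ x, -S x ≤ Real.log (f u x / gb x) := by
    intro x
    have hS0 : 0 ≤ S x := Finset.sum_nonneg fun v _ => abs_nonneg _
    have hfv_le : ∀ v, f v x ≤ f u x * Real.exp (S x) := by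
      intro v
      have habs : |l v x| ≤ S x := by
        simp only [hS]
        exact Finset.single_le_sum (f := fun w => |l w x|) (fun w _ => abs_nonneg _)
          (Finset.mem_univ v)
      have h1 : -(Real.log (f u x) - Real.log (f v x)) ≤ S x := by
        rw [ht v x]
        calc -(l v x) ≤ |l v x| := neg_le_abs _
          _ ≤ S x := habs
      calc f v x = Real.exp (Real.log (f v x)) := (Real.exp_log (hfpos v x)).symm
        _ ≤ Real.exp (Real.log (f u x) + S x) := Real.exp_le_exp.2 (by linarith)
        _ = f u x * Real.exp (S x) := by rw [Real.exp_add, Real.exp_log (hfpos u x)]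
    have hgb_le : gb x ≤ f u x * Real.exp (S x) := by
      have hsum_le : ∑ v, f v x ≤ n * (f u x * Real.exp (S x)) := by
        calc ∑ v, f v x ≤ ∑ _v : Fin n, f u x * Real.exp (S x) :=
              Finset.sum_le_sum fun v _ => hfv_le v
          _ = n * (f u x * Real.exp (S x)) := by
              rw [Finset.sum_const, Finset.card_univ, Fintype.card_fin, nsmul_eq_mul]
      simp only [hgb]
      calc (n:ℝ)⁻¹ * ∑ v, f v x ≤ (n:ℝ)⁻¹ * (n * (f u x * Real.exp (S x))) := by
            apply mul_le_mul_of_nonneg_left hsum_le (by positivity)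
        _ = f u x * Real.exp (S x) := by field_simp
    rw [Real.log_div (hfpos u x).ne' (hgbpos x).ne']
    have h2 : Real.log (gb x) ≤ Real.log (f u x) + S x := by
      calc Real.log (gb x) ≤ Real.log (f u x * Real.exp (S x)) :=
            Real.log_le_log (hgbpos x) hgb_le
        _ = Real.log (f u x) + S x := by
            rw [Real.log_mul (hfpos u x).ne' (Real.exp_ne_zero _), Real.log_exp]
    linarith
  have hLS : ∀ x, L x ≤ S x := by
    intro x
    have hS0 : 0 ≤ S x := Finset.sum_nonneg fun v _ => abs_nonneg _
    have h1 : ∑ v, l v x ≤ S x := by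
      simp only [hS]
      exact Finset.sum_le_sum fun v _ => le_abs_self _
    have h2 : (n:ℝ)⁻¹ ≤ 1 := by
      rw [inv_le_one_iff₀]
      right
      exact_mod_cast hnn
    simp only [hL]
    calc (n:ℝ)⁻¹ * ∑ v, l v x ≤ (n:ℝ)⁻¹ * S x := mul_le_mul_of_nonneg_left h1 (by positivity)
      _ ≤ 1 * S x := mul_le_mul_of_nonneg_right h2 hS0
      _ = S x := one_mul _
  -- integrability and integrals of the coordinate terms
  have hψ : ∀ (v : Fin n) (i : Fin d) (y : ℝ),
      ((y - b v i)^2 - (y - b u i)^2) / (2*σ^2)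
        = ((b u i - b v i)/σ^2) * y + ((b v i)^2 - (b u i)^2)/(2*σ^2) := by
    intro v i y
    field_simp
    ring
  have hterm_int : ∀ (v : Fin n) (i : Fin d),
      Integrable (fun x : Fin d → ℝ => ((x i - b v i)^2 - (x i - b u i)^2) / (2*σ^2)) (P u) := by
    intro v i
    have heq : (fun x : Fin d → ℝ => ((x i - b v i)^2 - (x i - b u i)^2) / (2*σ^2))
        = fun x => (((b u i - b v i)/σ^2) * (x i) + ((b v i)^2 - (b u i)^2)/(2*σ^2)) :=
      funext fun x => hψ v i (x i)
    rw [heq, hP]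
    exact (integrable_comp_eval _ i (by fun_prop)
      ((integrable_id_gaussianReal _ hV).const_mul _)).add (integrable_const _)
  have hterm_val : ∀ (v : Fin n) (i : Fin d),
      ∫ x, ((x i - b v i)^2 - (x i - b u i)^2) / (2*σ^2) ∂(P u)
        = (b u i - b v i)^2 / (2*σ^2) := by
    intro v i
    have heq : (fun x : Fin d → ℝ => ((x i - b v i)^2 - (x i - b u i)^2) / (2*σ^2))
        = fun x => (((b u i - b v i)/σ^2) * (x i) + ((b v i)^2 - (b u i)^2)/(2*σ^2)) :=
      funext fun x => hψ v i (x i)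
    rw [heq, hP]
    rw [integral_add (integrable_comp_eval _ i (by fun_prop)
      ((integrable_id_gaussianReal _ hV).const_mul _)) (integrable_const _)]
    rw [integral_const]
    have h1 : ∫ x : Fin d → ℝ, ((b u i - b v i)/σ^2) * (x i)
        ∂(Measure.pi fun j => gaussianReal (b u j) V)
        = ((b u i - b v i)/σ^2) * (b u i) := by
      rw [integral_comp_eval _ i (φ := fun y => ((b u i - b v i)/σ^2) * y) (by fun_prop)]
      rw [MeasureTheory.integral_const_mul, integral_id_gaussianReal _ hV]
    rw [h1]
    simp only [probReal_univ, one_smul]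
    field_simp
    ring
  have hlint : ∀ v, Integrable (l v) (P u) := by
    intro v
    simp only [hl]
    exact integrable_finset_sum _ fun i _ => hterm_int v i
  have hlval : ∀ v, ∫ x, l v x ∂(P u) = (∑ i, (b u i - b v i)^2) / (2*σ^2) := by
    intro v
    simp only [hl]
    rw [integral_finset_sum _ fun i _ => hterm_int v i, Finset.sum_div]
    exact Finset.sum_congr rfl fun i _ => hterm_val v i
  have hSint : Integrable S (P u) := by
    simp only [hS]
    exact integrable_finset_sum _ fun v _ => (hlint v).abs
  have hLint : Integrable L (P u) := by
    simp only [hL]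
    exact (integrable_finset_sum _ fun v _ => hlint v).const_mul _
  have hllrint : Integrable (llr (P u) Pbar) (P u) := by
    refine Integrable.mono' hSint (stronglyMeasurable_llr _ _).aestronglyMeasurable ?_
    filter_upwards [hllr] with x hx
    rw [hx, Real.norm_eq_abs, abs_le]
    exact ⟨hllr_ge x, le_trans (hllr_le x) (hLS x)⟩
  -- conclusion
  rw [klDiv, if_pos ⟨hac, hllrint⟩]
  apply ENNReal.ofReal_le_ofReal
  have h1 : ∫ x, llr (P u) Pbar x ∂(P u) ≤ ∫ x, L x ∂(P u) := by
    refine integral_mono_ae hllrint hLint ?_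
    filter_upwards [hllr] with x hx
    rw [hx]
    exact hllr_le x
  have h2 : ∫ x, L x ∂(P u) = (n:ℝ)⁻¹ * ∑ v, (∑ i, (b u i - b v i)^2) / (2*σ^2) := by
    simp only [hL]
    rw [MeasureTheory.integral_const_mul, integral_finset_sum _ fun v _ => hlint v]
    congr 1
    exact Finset.sum_congr rfl fun v _ => hlval v
  linarith

lemma klDiv_map_equiv_le {α β : Type*} [MeasurableSpace α] [MeasurableSpace β] (e : α ≃ᵐ β)
    (μ ν : Measure α) [IsFiniteMeasure μ] [IsFiniteMeasure ν] :
    klDiv (μ.map e) (ν.map e) ≤ klDiv μ ν := by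
  by_cases h : μ ≪ ν ∧ Integrable (llr μ ν) μ
  · have hf := e.measurableEmbedding
    have hac : μ.map e ≪ ν.map e := h.1.map e.measurable
    have hllr : (fun x => llr (μ.map e) (ν.map e) (e x)) =ᵐ[μ] llr μ ν := by
      filter_upwards [h.1.ae_le (hf.rnDeriv_map μ ν)] with x hx
      simp only [llr]
      rw [hx]
    have hint : Integrable (llr (μ.map e) (ν.map e)) (μ.map e) := by
      rw [hf.integrable_map_iff]
      exact (integrable_congr hllr).mpr h.2
    rw [klDiv, klDiv, if_pos ⟨hac, hint⟩, if_pos h, hf.integral_map, integral_congr_ae hllr]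
  · have htop : klDiv μ ν = ⊤ := by rw [klDiv, if_neg h]
    rw [htop]
    exact le_top

end Aux

/-- Bounds for preconditioned gradient descent: the leave-one-out conditional mutual
information of the one-step preconditioned noisy update is bounded by the
preconditioned bias and variance terms plus a stability term. -/
theorem loo_cmi_precond_bound (d n : ℕ) (hd : 1 ≤ d) (hn : 2 ≤ n)
    (σ η β B : ℝ) (hσ : 0 < σ) (hη : 0 ≤ η) (hβ : 0 ≤ β) (hB : 0 ≤ B)
    (g : Fin n → EuclideanSpace ℝ (Fin d)) (hg : ∀ u, ‖g u‖ ≤ B)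
    (μ : EuclideanSpace ℝ (Fin d)) (hμ : μ = (n : ℝ)⁻¹ • ∑ v, g v)
    (μloo : Fin n → EuclideanSpace ℝ (Fin d))
    (hμloo : ∀ u, μloo u = ((n : ℝ) - 1)⁻¹ • ∑ v ∈ univ.erase u, g v)
    (M : Fin n → EuclideanSpace ℝ (Fin d) →L[ℝ] EuclideanSpace ℝ (Fin d))
    (Mbar : EuclideanSpace ℝ (Fin d) →L[ℝ] EuclideanSpace ℝ (Fin d))
    (hMbar : Mbar = (n : ℝ)⁻¹ • ∑ v, M v)
    (hM : ∀ u v, ‖M u - M v‖ ≤ β / n)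
    (Θ₀ : EuclideanSpace ℝ (Fin d))
    (δ : Fin n → EuclideanSpace ℝ (Fin d)) (hδ : ∀ u, δ u = -(η • M u (μloo u))) :
    (n : ℝ≥0∞)⁻¹ *
        ∑ u, klDiv (gaussianPi (Θ₀ + δ u) σ) ((n : ℝ≥0∞)⁻¹ • ∑ v, gaussianPi (Θ₀ + δ v) σ) ≤
      ENNReal.ofReal
        ((3 * η ^ 2 / σ ^ 2) * ((n : ℝ) / ((n : ℝ) - 1)) ^ 2
            * ((1 / n) * ∑ u, ‖(M u - Mbar) μ‖ ^ 2)
          + (3 * η ^ 2 / (σ ^ 2 * ((n : ℝ) - 1) ^ 2))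
            * ((1 / n) * ∑ u, ‖M u (g u - μ)‖ ^ 2)
          + 3 * η ^ 2 * β ^ 2 * B ^ 2 / (σ ^ 2 * ((n : ℝ) - 1) ^ 2 * (n : ℝ) ^ 2)) := by
  classical
  have hσ2 : (0:ℝ) < σ^2 := by positivity
  have hnn : 0 < n := lt_of_lt_of_le two_pos hn
  have hn0 : (0:ℝ) < (n:ℝ) := by exact_mod_cast hnn
  have hnne : (n:ℝ) ≠ 0 := ne_of_gt hn0
  have hn2 : (2:ℝ) ≤ (n:ℝ) := by exact_mod_cast hn
  have hm0 : (0:ℝ) < (n:ℝ) - 1 := by linarith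
  have hmne : (n:ℝ) - 1 ≠ 0 := ne_of_gt hm0
  -- the per-u KL bound
  set K : Fin n → ℝ := fun u =>
    (n:ℝ)⁻¹ * ∑ v, (∑ i, ((Θ₀ + δ u) i - (Θ₀ + δ v) i)^2) / (2*σ^2) with hK
  have hkl : ∀ u, klDiv (gaussianPi (Θ₀ + δ u) σ)
      ((n : ℝ≥0∞)⁻¹ • ∑ v, gaussianPi (Θ₀ + δ v) σ) ≤ ENNReal.ofReal (K u) := by
    intro u
    have hmix : (n : ℝ≥0∞)⁻¹ • ∑ v, gaussianPi (Θ₀ + δ v) σ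
        = ((n : ℝ≥0∞)⁻¹ • ∑ v, Measure.pi fun i => gaussianReal ((Θ₀ + δ v) i) ((σ^2).toNNReal)).map
            (WithLp.toLp 2) := by
      ext s hs
      simp only [gaussianPi, Measure.smul_apply, Measure.finset_sum_apply,
        Measure.map_apply (WithLp.measurable_toLp 2 (Fin d → ℝ)) hs]
    haveI : IsFiniteMeasure ((n : ℝ≥0∞)⁻¹ • ∑ v, Measure.pi fun i =>
        gaussianReal ((Θ₀ + δ v) i) ((σ^2).toNNReal)) := ⟨by
      rw [Measure.smul_apply, Measure.finset_sum_apply]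
      simp only [measure_univ, Finset.sum_const, Finset.card_univ, Fintype.card_fin,
        nsmul_eq_mul, mul_one, smul_eq_mul]
      exact ENNReal.mul_lt_top (ENNReal.inv_lt_top.2 (by exact_mod_cast hnn))
        (ENNReal.natCast_lt_top n)⟩
    have hmap := klDiv_map_equiv_le (MeasurableEquiv.toLp 2 (Fin d → ℝ))
      (Measure.pi fun i => gaussianReal ((Θ₀ + δ u) i) ((σ^2).toNNReal))
      ((n : ℝ≥0∞)⁻¹ • ∑ v, Measure.pi fun i => gaussianReal ((Θ₀ + δ v) i) ((σ^2).toNNReal))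
    rw [MeasurableEquiv.coe_toLp] at hmap
    rw [hmix, gaussianPi]
    exact le_trans hmap (kl_mixture_le hn hσ (fun v i => (Θ₀ + δ v) i) u)
  have hK0 : ∀ u, 0 ≤ K u := by
    intro u
    rw [hK]
    have : ∀ v : Fin n, 0 ≤ (∑ i, ((Θ₀ + δ u) i - (Θ₀ + δ v) i)^2) / (2*σ^2) := fun v => by
      positivity
    positivity
  -- coordinates to norms
  have hco : ∀ u v : Fin n,
      (∑ i, ((Θ₀ + δ u) i - (Θ₀ + δ v) i)^2) = ‖δ u - δ v‖^2 := by
    intro u v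
    have h1 : ∀ i, (Θ₀ + δ u) i - (Θ₀ + δ v) i = (δ u - δ v) i := by
      intro i
      simp [PiLp.add_apply, PiLp.sub_apply]
    have h2 : ‖δ u - δ v‖^2 = ∑ i, ‖(δ u - δ v) i‖^2 := by
      rw [EuclideanSpace.norm_eq, Real.sq_sqrt (Finset.sum_nonneg fun i _ => by positivity)]
    rw [h2]
    refine Finset.sum_congr rfl fun i _ => ?_
    rw [h1 i, Real.norm_eq_abs, sq_abs]
  -- the vector decomposition
  set A : Fin n → EuclideanSpace ℝ (Fin d) := fun u => (M u - Mbar) μ with hA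
  set C : Fin n → EuclideanSpace ℝ (Fin d) := fun u => M u (g u - μ) with hC
  have hsumg : ∑ v, g v = (n:ℝ) • μ := by
    rw [hμ, smul_smul, mul_inv_cancel₀ hnne, one_smul]
  have hMid : ∀ u, M u (μloo u) = A u + Mbar μ - (((n:ℝ)-1)⁻¹) • C u := by
    intro u
    have hloo : μloo u = ((n:ℝ)-1)⁻¹ • ((n:ℝ) • μ - g u) := by
      rw [hμloo u, Finset.sum_erase_eq_sub (Finset.mem_univ u), hsumg]
    rw [hloo, (M u).map_smul, (M u).map_sub, (M u).map_smul]
    simp only [hA, hC, ContinuousLinearMap.sub_apply, map_sub]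
    match_scalars <;> field_simp <;> ring
  have hdd : ∀ u v, δ u - δ v
      = (-η) • ((A u - A v) - (((n:ℝ)-1)⁻¹) • (C u - C v)) := by
    intro u v
    rw [hδ u, hδ v, hMid u, hMid v]
    module
  -- assemble
  calc (n : ℝ≥0∞)⁻¹ *
        ∑ u, klDiv (gaussianPi (Θ₀ + δ u) σ) ((n : ℝ≥0∞)⁻¹ • ∑ v, gaussianPi (Θ₀ + δ v) σ)
      ≤ (n : ℝ≥0∞)⁻¹ * ∑ u, ENNReal.ofReal (K u) :=
        mul_le_mul_right (Finset.sum_le_sum fun u _ => hkl u) _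
    _ = ENNReal.ofReal ((n:ℝ)⁻¹ * ∑ u, K u) := by
        rw [ENNReal.ofReal_mul (by positivity), ENNReal.ofReal_inv_of_pos hn0,
          ENNReal.ofReal_natCast, ENNReal.ofReal_sum_of_nonneg fun u _ => hK0 u]
    _ ≤ _ := by
        apply ENNReal.ofReal_le_ofReal
        have hT3 : 0 ≤ 3 * η ^ 2 * β ^ 2 * B ^ 2 / (σ ^ 2 * ((n:ℝ) - 1) ^ 2 * (n:ℝ) ^ 2) := by
          positivity
        have halg := alg_bound hn η σ _ hη hσ2 hT3 δ A C hdd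
        have hKeq : ∀ u, K u = (n:ℝ)⁻¹ * ((∑ v, ‖δ u - δ v‖^2)/(2*σ^2)) := by
          intro u
          simp only [hK]
          rw [Finset.sum_div]
          congr 1
          exact Finset.sum_congr rfl fun v _ => by rw [hco u v]
        rw [Finset.sum_congr rfl fun u _ => hKeq u]
        simp only [hA, hC] at halg
        convert halg using 3 <;> norm_num
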